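/- The complex group algebra ℂ[Γ] is isomorphic as a ℂ-algebra to the product ℂ⁶ × M₂(ℂ)³, i.e. to (Fin 6 → ℂ) × (Fin 3 → Matrix (Fin 2) (Fin 2) ℂ). (Equivalently: Γ has exactly nine irreducible complex representations, of which six are 1-dimensional and three are 2-dimensional.) -/

import Mathlib

open MvPolynomial

/-- Substitution of a 2×2 matrix into a polynomial in two variables:
`tᵢ ↦ gᵢ₁ t₁ + gᵢ₂ t₂`. -/
noncomputable def bsub (g : Matrix (Fin 2) (Fin 2) ℂ) (p : MvPolynomial (Fin 2) ℂ) :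
    MvPolynomial (Fin 2) ℂ :=
  aeval (fun i => C (g i 0) * X 0 + C (g i 1) * X 1) p

lemma bsub_one (p : MvPolynomial (Fin 2) ℂ) : bsub 1 p = p := by
  have : (fun i => C ((1 : Matrix (Fin 2) (Fin 2) ℂ) i 0) * X 0
      + C ((1 : Matrix (Fin 2) (Fin 2) ℂ) i 1) * X 1) = (X : Fin 2 → MvPolynomial (Fin 2) ℂ) := by
    funext i
    fin_cases i <;> simp [Matrix.one_apply]
  rw [bsub, this, aeval_X_left_apply]

lemma bsub_mul (g h : Matrix (Fin 2) (Fin 2) ℂ) (p : MvPolynomial (Fin 2) ℂ) :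
    bsub (g * h) p = bsub h (bsub g p) := by
  unfold bsub
  rw [← AlgHom.comp_apply]
  refine DFunLike.congr_fun ?_ p
  apply algHom_ext
  intro i
  simp [Matrix.mul_apply, Fin.sum_univ_two]
  ring

/-- The binary cubic `t₁³ + t₂³`. -/
noncomputable def cubicDiag : MvPolynomial (Fin 2) ℂ := X 0 ^ 3 + X 1 ^ 3

/-- The stabilizer `Γ` of the binary cubic `t₁³ + t₂³` in `GL₂(ℂ)`. -/
noncomputable def Gamma : Subgroup (GL (Fin 2) ℂ) where
  carrier := {g | bsub (↑g) cubicDiag = cubicDiag}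
  one_mem' := bsub_one _
  mul_mem' := by
    intro g h hg hh
    show bsub (↑(g * h)) cubicDiag = cubicDiag
    rw [Units.val_mul, bsub_mul, hg, hh]
  inv_mem' := by
    intro g hg
    show bsub (↑g⁻¹) cubicDiag = cubicDiag
    have hg' : bsub (↑g) cubicDiag = cubicDiag := hg
    have h1 : bsub ((↑g : Matrix (Fin 2) (Fin 2) ℂ) * (↑g⁻¹ : Matrix (Fin 2) (Fin 2) ℂ)) cubicDiag
        = bsub (↑g⁻¹ : Matrix (Fin 2) (Fin 2) ℂ) cubicDiag := by
      rw [bsub_mul, hg']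
    have h2 : (↑g : Matrix (Fin 2) (Fin 2) ℂ) * (↑g⁻¹ : Matrix (Fin 2) (Fin 2) ℂ) = 1 := by
      rw [← Units.val_mul, mul_inv_cancel, Units.val_one]
    rw [← h1, h2, bsub_one]


noncomputable def omg : ℂ := Complex.exp (2 * Real.pi * Complex.I / 3)
lemma omg_prim : IsPrimitiveRoot omg 3 := by
  simpa [omg] using Complex.isPrimitiveRoot_exp 3 (by norm_num)
lemma omg_cube : omg ^ 3 = 1 := omg_prim.pow_eq_one
lemma omg_ne_one : omg ≠ 1 := by
  intro h
  have := omg_prim.pow_ne_one_of_pos_of_lt (l := 1) one_ne_zero (by norm_num)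
  simp [h] at this
lemma omg_sum : 1 + omg + omg ^ 2 = 0 := by
  have h : (omg - 1) * (1 + omg + omg ^ 2) = 0 := by linear_combination omg_cube
  rcases mul_eq_zero.mp h with h | h
  · exact absurd (by linear_combination h) omg_ne_one
  · exact h
noncomputable def w (z : ZMod 3) : ℂ := omg ^ z.val
lemma w_zero : w 0 = 1 := by simp [w]
lemma w_add (a b : ZMod 3) : w (a + b) = w a * w b := by
  rw [w, w, w, ← pow_add]
  have hv : (a+b).val = (a.val + b.val) % 3 := by
    rw [ZMod.val_add]
  rw [hv]
  conv_rhs => rw [← Nat.mod_add_div (a.val + b.val) 3, pow_add, pow_mul, omg_cube, one_pow, mul_one]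
lemma w_cube (z : ZMod 3) : w z ^ 3 = 1 := by
  rw [w, ← pow_mul, mul_comm, pow_mul, omg_cube, one_pow]
lemma w_ne_zero (z : ZMod 3) : w z ≠ 0 := by
  intro h
  have := w_cube z
  rw [h] at this
  simp at this
lemma w_injective : Function.Injective w := by
  intro a b hab
  have := omg_prim.pow_inj a.val_lt b.val_lt hab
  exact ZMod.val_injective _ this
lemma w_one : w 1 = omg := by
  rw [w, ZMod.val_one]; ring
lemma w_two : w 2 = omg ^ 2 := by rfl
lemma w_sum (c : ZMod 3) : (∑ k : ZMod 3, w (k * c)) = if c = 0 then 3 else 0 := by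
  have h3 : (∑ k : ZMod 3, w (k * c)) = w 0 + w c + w (2 * c) := by
    rw [show (Finset.univ : Finset (ZMod 3)) = {0, 1, 2} by decide]
    rw [Finset.sum_insert (by decide), Finset.sum_insert (by decide), Finset.sum_singleton]
    rw [zero_mul, one_mul, add_assoc]
  rw [h3]
  fin_cases c
  · show w 0 + w 0 + w (2 * 0) = if (0:ZMod 3) = 0 then 3 else 0
    norm_num [w_zero]
  · show w 0 + w 1 + w (2 * 1) = if (1:ZMod 3) = 0 then 3 else 0
    rw [if_neg (by decide)]
    norm_num [w_zero, w_one, w_two]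
    linear_combination omg_sum
  · norm_num [w_zero]
    show 1 + w 2 + w (2 * 2) = 0
    rw [show (2 * 2 : ZMod 3) = 1 by decide, w_one, w_two]
    linear_combination omg_sum


lemma w_sum' (c : ZMod 3) : w (0 * c) + w (1 * c) + w (2 * c) = if c = 0 then 3 else 0 := by
  rw [← w_sum c, show (Finset.univ : Finset (ZMod 3)) = {0, 1, 2} by decide,
    Finset.sum_insert (by decide), Finset.sum_insert (by decide), Finset.sum_singleton]
  ring

lemma bsub_cubic_iff (m : Matrix (Fin 2) (Fin 2) ℂ) :
    bsub m cubicDiag = cubicDiag ↔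
      ∀ x y : ℂ, (m 0 0 * x + m 0 1 * y) ^ 3 + (m 1 0 * x + m 1 1 * y) ^ 3 = x ^ 3 + y ^ 3 := by
  rw [bsub, cubicDiag, MvPolynomial.funext_iff]
  constructor
  · intro h x y
    have := h ![x, y]
    simpa using this
  · intro h v
    have := h (v 0) (v 1)
    simpa using this


lemma classify (a b c d : ℂ)
    (hdet : a * d - b * c ≠ 0)
    (H : ∀ x y : ℂ, (a * x + b * y) ^ 3 + (c * x + d * y) ^ 3 = x ^ 3 + y ^ 3) :
    (b = 0 ∧ c = 0 ∧ a ^ 3 = 1 ∧ d ^ 3 = 1) ∨ (a = 0 ∧ d = 0 ∧ b ^ 3 = 1 ∧ c ^ 3 = 1) := by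
  have E1 : a ^ 3 + c ^ 3 = 1 := by linear_combination H 1 0
  have E2 : b ^ 3 + d ^ 3 = 1 := by linear_combination H 0 1
  have E3 : a ^ 2 * b + c ^ 2 * d = 0 := by
    linear_combination (H 1 1 - H 1 (-1)) / 6 - E2 / 3
  have E4 : a * b ^ 2 + c * d ^ 2 = 0 := by
    linear_combination (H 1 1 + H 1 (-1)) / 6 - E1 / 3
  by_cases hb : b = 0
  · subst hb
    have hcd : c ^ 2 * d = 0 := by linear_combination E3
    rcases mul_eq_zero.mp hcd with hc | hd
    · have hc : c = 0 := by
        have := pow_eq_zero_iff (n := 2) (by norm_num) |>.mp hc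
        exact this
      left
      exact ⟨rfl, hc, by linear_combination E1 - (by simpa [hc] using congrArg (· ^ 3) hc : c^3 = 0), by linear_combination E2⟩
    · exfalso
      have : (0:ℂ) = 1 := by linear_combination E2 - (by rw [hd]; ring : d ^ 3 = 0)
      simp at this
  · by_cases hc : c = 0
    · exfalso
      subst hc
      have hab : a ^ 2 * b = 0 := by linear_combination E3
      have ha : a = 0 := by
        rcases mul_eq_zero.mp hab with h | h
        · exact pow_eq_zero_iff (by norm_num) |>.mp h
        · exact absurd h hb
      subst ha
      have : (0:ℂ) = 1 := by linear_combination E1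
      simp at this
    · by_cases ha : a = 0
      · subst ha
        have hd : d = 0 := by
          have : c ^ 2 * d = 0 := by linear_combination E3
          rcases mul_eq_zero.mp this with h | h
          · exact absurd (pow_eq_zero_iff (by norm_num) |>.mp h) hc
          · exact h
        right
        exact ⟨rfl, hd, by linear_combination E2 - (by rw [hd]; ring : d^3 = 0),
          by linear_combination E1⟩
      · exfalso
        by_cases hd : d = 0
        · subst hd
          have : a * b ^ 2 = 0 := by linear_combination E4
          rcases mul_eq_zero.mp this with h | h
          · exact ha h
          · exact hb (pow_eq_zero_iff (by norm_num) |>.mp h)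
        · have key : a * b * c * d * (a * d - b * c) = 0 := by
            linear_combination c * d ^ 2 * E3 - c ^ 2 * d * E4
          rcases mul_eq_zero.mp key with h | h
          · rcases mul_eq_zero.mp h with h | h
            · rcases mul_eq_zero.mp h with h | h
              · rcases mul_eq_zero.mp h with h | h
                · exact ha h
                · exact hb h
              · exact hc h
            · exact hd h
          · exact hdet h


lemma Gamma_mem (g : GL (Fin 2) ℂ) : g ∈ Gamma ↔ bsub (↑g) cubicDiag = cubicDiag := Iff.rfl

abbrev Gp := Multiplicative (ZMod 3) × DihedralGroup 3

open DihedralGroup in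
noncomputable def N : Gp → Matrix (Fin 2) (Fin 2) ℂ
  | (c, .r i) => !![w (Multiplicative.toAdd c + i), 0; 0, w (Multiplicative.toAdd c - i)]
  | (c, .sr i) => !![0, w (Multiplicative.toAdd c - i); w (Multiplicative.toAdd c + i), 0]

lemma N_one : N 1 = 1 := by
  show N (1, DihedralGroup.r 0) = 1
  rw [N]
  norm_num [w_zero]
  exact (Matrix.one_fin_two).symm

lemma N_mul (p q : Gp) : N (p * q) = N p * N q := by
  obtain ⟨c, x⟩ := p
  obtain ⟨d, y⟩ := q
  obtain i | i := x <;> obtain j | j := y <;>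
    simp only [Prod.mk_mul_mk, DihedralGroup.r_mul_r, DihedralGroup.r_mul_sr,
      DihedralGroup.sr_mul_r, DihedralGroup.sr_mul_sr, N, Matrix.mul_fin_two, toAdd_mul] <;>
  · ext i j
    fin_cases i <;> fin_cases j <;>
      simp <;> (rw [← w_add]; congr 1; ring)

lemma cube_root_exists (x : ℂ) (hx : x ^ 3 = 1) : ∃ z : ZMod 3, w z = x := by
  obtain ⟨i, hi3, hi⟩ := omg_prim.eq_pow_of_pow_eq_one hx
  exact ⟨(i : ZMod 3), by rwa [w, ZMod.val_natCast_of_lt hi3]⟩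

lemma N_mem (p : Gp) : bsub (N p) cubicDiag = cubicDiag := by
  rw [bsub_cubic_iff]
  obtain ⟨c, x⟩ := p
  obtain i | i := x <;> intro x y <;> simp [N]
  · linear_combination x ^ 3 * w_cube (Multiplicative.toAdd c + i)
      + y ^ 3 * w_cube (Multiplicative.toAdd c - i)
  · linear_combination y ^ 3 * w_cube (Multiplicative.toAdd c - i)
      + x ^ 3 * w_cube (Multiplicative.toAdd c + i)

noncomputable def NU (p : Gp) : GL (Fin 2) ℂ :=
  ⟨N p, N p⁻¹, by rw [← N_mul, mul_inv_cancel, N_one], by rw [← N_mul, inv_mul_cancel, N_one]⟩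

noncomputable def toGamma : Gp →* Gamma where
  toFun p := ⟨NU p, (Gamma_mem _).mpr (N_mem p)⟩
  map_one' := Subtype.ext (Units.ext N_one)
  map_mul' p q := Subtype.ext (Units.ext (N_mul p q))

lemma zmod_two_ne_zero : (2 : ZMod 3) ≠ 0 := by decide

lemma toGamma_injective : Function.Injective toGamma := by
  intro p q hpq
  have hN : N p = N q := congrArg (fun a : ↥Gamma => ((a : GL (Fin 2) ℂ) : Matrix (Fin 2) (Fin 2) ℂ)) hpq
  obtain ⟨c, x⟩ := p
  obtain ⟨d, y⟩ := q
  obtain i | i := x <;> obtain j | j := y <;> simp only [N] at hN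
  · have e1 : w (Multiplicative.toAdd c + i) = w (Multiplicative.toAdd d + j) := by
      have := congrFun (congrFun hN 0) 0; simpa using this
    have e2 : w (Multiplicative.toAdd c - i) = w (Multiplicative.toAdd d - j) := by
      have := congrFun (congrFun hN 1) 1; simpa using this
    have f1 := w_injective e1
    have f2 := w_injective e2
    have hcd : Multiplicative.toAdd c = Multiplicative.toAdd d := by
      have h2 : 2 * Multiplicative.toAdd c = 2 * Multiplicative.toAdd d := by
        linear_combination f1 + f2
      exact mul_left_cancel₀ zmod_two_ne_zero h2
    have hij : i = j := by
      rw [hcd] at f1; exact add_left_cancel f1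
    rw [Prod.ext_iff]
    exact ⟨Multiplicative.toAdd.injective hcd, by rw [hij]⟩
  · have h00 := congrFun (congrFun hN 0) 0
    simp at h00
    first
      | exact absurd h00 (w_ne_zero _)
      | exact absurd h00.symm (w_ne_zero _)
  · have h00 := congrFun (congrFun hN 0) 0
    simp at h00
    first
      | exact absurd h00 (w_ne_zero _)
      | exact absurd h00.symm (w_ne_zero _)
  · have e1 : w (Multiplicative.toAdd c + i) = w (Multiplicative.toAdd d + j) := by
      have := congrFun (congrFun hN 1) 0; simpa using this
    have e2 : w (Multiplicative.toAdd c - i) = w (Multiplicative.toAdd d - j) := by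
      have := congrFun (congrFun hN 0) 1; simpa using this
    have f1 := w_injective e1
    have f2 := w_injective e2
    have hcd : Multiplicative.toAdd c = Multiplicative.toAdd d := by
      have h2 : 2 * Multiplicative.toAdd c = 2 * Multiplicative.toAdd d := by
        linear_combination f1 + f2
      exact mul_left_cancel₀ zmod_two_ne_zero h2
    have hij : i = j := by
      rw [hcd] at f1; exact add_left_cancel f1
    rw [Prod.ext_iff]
    exact ⟨Multiplicative.toAdd.injective hcd, by rw [hij]⟩

lemma solve_key : ∀ u v : ZMod 3, 2*(u+v) + 2*(u-v) = u ∧ 2*(u+v) - 2*(u-v) = v := by decide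

lemma toGamma_coe (p : Gp) :
    ((toGamma p : GL (Fin 2) ℂ) : Matrix (Fin 2) (Fin 2) ℂ) = N p := rfl

lemma toGamma_surjective : Function.Surjective toGamma := by
  rintro ⟨g, hg⟩
  have hg' := (Gamma_mem g).mp hg
  set m : Matrix (Fin 2) (Fin 2) ℂ := (↑g : Matrix (Fin 2) (Fin 2) ℂ) with hm
  have hdet : m 0 0 * m 1 1 - m 0 1 * m 1 0 ≠ 0 := by
    have hu : IsUnit m.det := (Matrix.isUnit_iff_isUnit_det m).mp ⟨g, rfl⟩
    rw [Matrix.det_fin_two] at hu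
    exact hu.ne_zero
  have H := (bsub_cubic_iff m).mp hg'
  rcases classify (m 0 0) (m 0 1) (m 1 0) (m 1 1) hdet H with
    ⟨hb, hc, ha3, hd3⟩ | ⟨ha, hd, hb3, hc3⟩
  · obtain ⟨za, hza⟩ := cube_root_exists _ ha3
    obtain ⟨zd, hzd⟩ := cube_root_exists _ hd3
    refine ⟨(Multiplicative.ofAdd (2*(za+zd)), DihedralGroup.r (2*(za-zd))), ?_⟩
    apply Subtype.ext
    apply Units.ext
    rw [toGamma_coe]
    show N _ = m
    simp only [N, toAdd_ofAdd]
    rw [(solve_key za zd).1, (solve_key za zd).2]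
    ext i j
    fin_cases i <;> fin_cases j <;> simp [hza, hzd, hb, hc]
  · obtain ⟨zb, hzb⟩ := cube_root_exists _ hb3
    obtain ⟨zc, hzc⟩ := cube_root_exists _ hc3
    refine ⟨(Multiplicative.ofAdd (2*(zc+zb)), DihedralGroup.sr (2*(zc-zb))), ?_⟩
    apply Subtype.ext
    apply Units.ext
    rw [toGamma_coe]
    show N _ = m
    simp only [N, toAdd_ofAdd]
    rw [(solve_key zc zb).1, (solve_key zc zb).2]
    ext i j
    fin_cases i <;> fin_cases j <;> simp [hzb, hzc, ha, hd]

noncomputable def gammaEquiv : Gp ≃* Gamma :=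
  MulEquiv.ofBijective toGamma ⟨toGamma_injective, toGamma_surjective⟩

open DihedralGroup in
noncomputable def sgn : DihedralGroup 3 → ℂ
  | .r _ => 1
  | .sr _ => -1

lemma sgn_one : sgn 1 = 1 := rfl

lemma sgn_mul (x y : DihedralGroup 3) : sgn (x * y) = sgn x * sgn y := by
  obtain i | i := x <;> obtain j | j := y <;> simp [DihedralGroup.r_mul_r,
    DihedralGroup.r_mul_sr, DihedralGroup.sr_mul_r, DihedralGroup.sr_mul_sr, sgn]

/-- the six 1-dim characters -/
noncomputable def chi (j : Fin 6) (p : Gp) : ℂ :=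
  w ((j.val : ZMod 3) * Multiplicative.toAdd p.1) * (if j.val < 3 then 1 else sgn p.2)

/-- the three 2-dim representations -/
noncomputable def pim (k : Fin 3) (p : Gp) : Matrix (Fin 2) (Fin 2) ℂ :=
  w ((k.val : ZMod 3) * Multiplicative.toAdd p.1) • N (1, p.2)

abbrev Alg := (Fin 6 → ℂ) × (Fin 3 → Matrix (Fin 2) (Fin 2) ℂ)

lemma chi_one (j : Fin 6) : chi j 1 = 1 := by
  simp [chi, sgn_one, w_zero]

lemma chi_mul (j : Fin 6) (p q : Gp) : chi j (p * q) = chi j p * chi j q := by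
  obtain ⟨c, x⟩ := p
  obtain ⟨d, y⟩ := q
  simp only [chi, Prod.fst_mul, Prod.snd_mul, toAdd_mul, mul_add, w_add, sgn_mul]
  by_cases h : j.val < 3 <;> simp [h] <;> ring

lemma pim_one (k : Fin 3) : pim k 1 = 1 := by
  have h1 : ((1 : Multiplicative (ZMod 3)), ((1:Gp).2)) = (1 : Gp) := rfl
  simp [pim, w_zero, h1, N_one]
  exact N_one

lemma pim_mul (k : Fin 3) (p q : Gp) : pim k (p * q) = pim k p * pim k q := by
  obtain ⟨c, x⟩ := p
  obtain ⟨d, y⟩ := q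
  have hN : N (1, x * y) = N (1, x) * N (1, y) := by
    have := N_mul (1, x) (1, y)
    simpa using this
  simp only [pim, Prod.fst_mul, Prod.snd_mul, toAdd_mul, mul_add, w_add, hN]
  rw [smul_mul_smul_comm]

noncomputable def rho : Gp →* Alg where
  toFun p := (fun j => chi j p, fun k => pim k p)
  map_one' := by
    refine Prod.ext ?_ ?_ <;> funext <;> simp [chi_one, pim_one] <;> rfl
  map_mul' p q := by
    refine Prod.ext ?_ ?_ <;> funext <;> simp [chi_mul, pim_mul] <;> rfl

lemma neg_eq_two_mul : ∀ i : ZMod 3, -i = 2 * i := by decide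

lemma one_iff (c' : ZMod 3) (x : DihedralGroup 3) :
    ((Multiplicative.ofAdd c', x) : Gp) = 1 ↔ (c' = 0 ∧ x = DihedralGroup.r 0) := by
  rw [Prod.ext_iff]
  constructor
  · rintro ⟨h1, h2⟩
    exact ⟨by simpa using congrArg Multiplicative.toAdd h1, h2⟩
  · rintro ⟨h1, h2⟩
    exact ⟨by rw [h1]; rfl, h2⟩

lemma regchar (g : Gp) :
    (∑ j : Fin 6, chi j g) + 2 * ∑ k : Fin 3, (pim k g).trace
      = if g = 1 then 18 else 0 := by
  obtain ⟨c, x⟩ := g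
  obtain ⟨c', rfl⟩ := Multiplicative.ofAdd.surjective c
  have hcast3 : ((3 : ℕ) : ZMod 3) = 0 := by decide
  have hcast4 : ((4 : ℕ) : ZMod 3) = 1 := by decide
  have hcast5 : ((5 : ℕ) : ZMod 3) = 2 := by decide
  have w3 : ∀ x : ZMod 3, w (3 * x) = 1 := by
    intro x; rw [show (3 : ZMod 3) = 0 from by decide, zero_mul, w_zero]
  have w4 : ∀ x : ZMod 3, w (4 * x) = w x := by
    intro x; rw [show (4 : ZMod 3) = 1 from by decide, one_mul]
  have w5 : ∀ x : ZMod 3, w (5 * x) = w (2 * x) := by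
    intro x; rw [show (5 : ZMod 3) = 2 from by decide]
  have hv0 : ((0 : Fin 6) : ℕ) = 0 := rfl
  have hv1 : ((1 : Fin 6) : ℕ) = 1 := rfl
  have hv2 : ((2 : Fin 6) : ℕ) = 2 := rfl
  have hv3 : ((3 : Fin 6) : ℕ) = 3 := rfl
  have hv4 : ((4 : Fin 6) : ℕ) = 4 := rfl
  have hv5 : ((5 : Fin 6) : ℕ) = 5 := rfl
  obtain i | i := x
  · have htr : ∀ k : Fin 3, (pim k (Multiplicative.ofAdd c', DihedralGroup.r i)).trace
        = w ((k.val : ZMod 3) * c') * (w i + w (2 * i)) := by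
      intro k
      simp [pim, N, Matrix.trace_fin_two, mul_add, ← w_add, ← neg_eq_two_mul]
    rw [Fin.sum_univ_six, Fin.sum_univ_three]
    simp only [htr, chi, toAdd_ofAdd, sgn]
    norm_num [hv0, hv1, hv2, hv3, hv4, hv5, hcast3, hcast4, hcast5, w3, w4, w5, w_zero]
    have hc := w_sum' c'
    have hi := w_sum' i
    simp only [zero_mul, one_mul, w_zero] at hc hi
    by_cases h1 : c' = 0 <;> by_cases h2 : i = 0
    · subst h1; subst h2
      rw [if_pos ⟨rfl, (DihedralGroup.one_def).symm⟩]
      norm_num [mul_zero, w_zero]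
    · subst h1
      rw [if_neg (fun hcon => h2 (DihedralGroup.r.inj (hcon.2.trans DihedralGroup.one_def)))]
      rw [if_neg h2] at hi
      norm_num [mul_zero, w_zero]
      linear_combination 6 * hi
    · subst h2
      rw [if_neg (by simp [h1])]
      rw [if_neg h1] at hc
      norm_num [mul_zero, w_zero]
      linear_combination (2 + 2 * (1 + 1)) * hc
    · rw [if_neg (by simp [h1])]
      rw [if_neg h1] at hc
      rw [if_neg h2] at hi
      linear_combination (2 + 2 * (w i + w (2 * i))) * hc
  · have htr : ∀ k : Fin 3, (pim k (Multiplicative.ofAdd c', DihedralGroup.sr i)).trace = 0 := by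
      intro k
      simp [pim, N, Matrix.trace_fin_two]
    rw [Fin.sum_univ_six, Fin.sum_univ_three]
    simp only [htr, chi, toAdd_ofAdd, sgn]
    have hne : ((Multiplicative.ofAdd c', DihedralGroup.sr i) : Gp) ≠ 1 := by
      intro h
      rw [one_iff] at h
      cases h.2
    rw [if_neg hne]
    norm_num [hv0, hv1, hv2, hv3, hv4, hv5, hcast3, hcast4, hcast5, w3, w4, w5, w_zero]
    ring

open Matrix in
noncomputable def tau (h : Gp) : Alg →ₗ[ℂ] ℂ where
  toFun v := ((∑ j : Fin 6, chi j h⁻¹ * v.1 j) + 2 * ∑ k : Fin 3, (pim k h⁻¹ * v.2 k).trace) / 18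
  map_add' v u := by
    simp only [Prod.fst_add, Prod.snd_add, Pi.add_apply, mul_add, Matrix.mul_add,
      Matrix.trace_add, Finset.sum_add_distrib]
    ring
  map_smul' c v := by
    simp only [Prod.smul_fst, Prod.smul_snd, Pi.smul_apply, smul_eq_mul, RingHom.id_apply,
      Matrix.mul_smul, Matrix.trace_smul, smul_eq_mul]
    have e1 : (∑ j : Fin 6, chi j h⁻¹ * (c * v.1 j)) = c * ∑ j : Fin 6, chi j h⁻¹ * v.1 j := by
      rw [Finset.mul_sum]; exact Finset.sum_congr rfl (fun _ _ => by ring)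
    have e2 : (∑ k : Fin 3, c * (pim k h⁻¹ * v.2 k).trace)
        = c * ∑ k : Fin 3, (pim k h⁻¹ * v.2 k).trace := by
      rw [Finset.mul_sum]
    rw [e1, e2]
    ring

lemma tau_rho (h g : Gp) : tau h (rho g) = if g = h then 1 else 0 := by
  have hchi : ∀ j, chi j h⁻¹ * chi j g = chi j (h⁻¹ * g) := fun j => (chi_mul j h⁻¹ g).symm
  have hpim : ∀ k, pim k h⁻¹ * pim k g = pim k (h⁻¹ * g) := fun k => (pim_mul k h⁻¹ g).symm
  show ((∑ j : Fin 6, chi j h⁻¹ * chi j g) + 2 * ∑ k : Fin 3, (pim k h⁻¹ * pim k g).trace) / 18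
      = _
  simp only [hchi, hpim]
  rw [regchar (h⁻¹ * g)]
  by_cases hgh : g = h
  · rw [if_pos hgh, if_pos (by rw [hgh, inv_mul_cancel])]
    norm_num
  · rw [if_neg hgh, if_neg (fun hcon => hgh (by
      have := congrArg (fun z => h * z) hcon
      simpa [mul_assoc] using this))]
    norm_num

noncomputable def Phi : MonoidAlgebra ℂ Gp →ₐ[ℂ] Alg := MonoidAlgebra.lift ℂ Alg Gp rho

lemma tau_Phi (h : Gp) (x : MonoidAlgebra ℂ Gp) : tau h (Phi x) = x.coeff h := by
  rw [Phi, MonoidAlgebra.lift_apply]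
  rw [map_finsuppSum]
  have : ∀ g ∈ x.coeff.support, tau h (x.coeff g • rho g) = if g = h then x.coeff g else 0 := by
    intro g _
    rw [map_smul, tau_rho, smul_eq_mul, mul_ite, mul_one, mul_zero]
  have hxy : (Finsupp.sum x.coeff fun a b => tau h (b • rho a))
      = ∑ g ∈ x.coeff.support, (if g = h then x.coeff g else 0) :=
    Finset.sum_congr rfl this
  rw [hxy, Finset.sum_ite_eq' x.coeff.support h]
  split
  · rfl
  · next hmem => exact (Finsupp.notMem_support_iff.mp hmem).symm

lemma Phi_injective : Function.Injective Phi := by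
  rw [injective_iff_map_eq_zero]
  intro x hx
  ext h
  have := tau_Phi h x
  rw [hx, map_zero] at this
  exact this.symm

instance : Fintype Gp := instFintypeProd _ _

lemma card_Gp : Fintype.card Gp = 18 := by
  rw [Fintype.card_prod, DihedralGroup.card]
  simp [ZMod.card]

lemma finrank_ma : Module.finrank ℂ (MonoidAlgebra ℂ Gp) = 18 := by
  rw [show Module.finrank ℂ (MonoidAlgebra ℂ Gp) = Module.finrank ℂ (Gp →₀ ℂ) from (MonoidAlgebra.coeffLinearEquiv ℂ).finrank_eq]
  rw [Module.finrank_finsupp_self, card_Gp]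

lemma finrank_alg : Module.finrank ℂ Alg = 18 := by
  rw [Module.finrank_prod, Module.finrank_pi, Module.finrank_pi_fintype]
  simp [Module.finrank_matrix]

lemma Phi_surjective : Function.Surjective Phi := by
  have h1 : FiniteDimensional ℂ (MonoidAlgebra ℂ Gp) := by
    have : FiniteDimensional ℂ (Gp →₀ ℂ) := inferInstance
    exact LinearEquiv.finiteDimensional (MonoidAlgebra.coeffLinearEquiv ℂ).symm
  have := (LinearMap.injective_iff_surjective_of_finrank_eq_finrank
    (f := Phi.toLinearMap) (by rw [finrank_ma, finrank_alg])).mp Phi_injective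
  exact this

noncomputable def algEquivGp : MonoidAlgebra ℂ Gp ≃ₐ[ℂ] Alg :=
  AlgEquiv.ofBijective Phi ⟨Phi_injective, Phi_surjective⟩

/-- **The complex group algebra of `Γ`** is isomorphic to `ℂ⁶ × M₂(ℂ)³`:
`Γ` has six 1-dimensional and three 2-dimensional irreducible representations. -/
theorem gamma_group_algebra :
    Nonempty (MonoidAlgebra ℂ Gamma ≃ₐ[ℂ]
      (Fin 6 → ℂ) × (Fin 3 → Matrix (Fin 2) (Fin 2) ℂ)) := by
  exact ⟨(MonoidAlgebra.domCongr ℂ ℂ gammaEquiv.symm).trans algEquivGp⟩
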